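/- Injectivity of the extended semigroup family composed with the homogeneous operator: if z ∈ X + D(Ȧ) satisfies Ȧ e^{−tA} z = 0 for all t > 0, then z = 0. -/

import Mathlib

open MeasureTheory Filter Topology Set
open scoped ENNReal NNReal

attribute [local instance] Classical.propDecidable

noncomputable section

/-- The measure `dt/t` on `(0,∞)`, used for the `L_{q,*}` spaces. -/
def haarScale : MeasureTheory.Measure ℝ :=
  (MeasureTheory.volume.restrict (Set.Ioi (0:ℝ))).withDensity fun t => ENNReal.ofReal t⁻¹

/-- The `L_q` norm of an `ℝ≥0∞`-valued quantity with respect to a measure on `ℝ`. -/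
def lqNorm (q : ℝ≥0∞) (μ : MeasureTheory.Measure ℝ) (F : ℝ → ℝ≥0∞) : ℝ≥0∞ :=
  if q = ⊤ then essSup F μ else (∫⁻ t, F t ^ q.toReal ∂μ) ^ (1 / q.toReal)

/-- The time interval `(0, T)` for `T ∈ (0,∞]`. -/
def timeInterval (T : ℝ≥0∞) : Set ℝ := {t : ℝ | 0 < t ∧ ENNReal.ofReal t < T}

/-- The abstract setting of the homogeneous Da Prato–Grisvard theory: `X` is a complex
Banach space, `A : D(A) ⊆ X → X` is a closed, densely defined, injective linear operator
such that `−A` generates a bounded strongly continuous analytic semigroup `(e^{−tA})_{t≥0}`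
(encoded by the field `S` together with the bounds `S_bdd` and `S_analytic` and the
generator identities `gen_eq` and `gen_eq_dom`); `Y` is a normed space, compatible with `X`
inside an ambient Hausdorff topological vector space `Z`, with `D(A) ⊆ Y` and
`C₁‖Ax‖ ≤ ‖x‖_Y ≤ C₂‖Ax‖` on `D(A)`; moreover `D(Ȧ) ∩ X = D(A)` (field `inter_sub`). -/
structure DPG (X Y Z : Type*) [NormedAddCommGroup X] [NormedSpace ℂ X] [CompleteSpace X]
    [NormedAddCommGroup Y] [NormedSpace ℂ Y]
    [AddCommGroup Z] [Module ℂ Z] [TopologicalSpace Z] [T2Space Z] : Type _ where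
  ιX : X →ₗ[ℂ] Z
  ιY : Y →ₗ[ℂ] Z
  ιX_inj : Function.Injective ιX
  ιY_inj : Function.Injective ιY
  dom : Submodule ℂ X
  dom_dense : Dense (dom : Set X)
  Aop : dom →ₗ[ℂ] X
  A_closed : IsClosed {p : X × X | ∃ x : dom, (x : X) = p.1 ∧ Aop x = p.2}
  A_inj : ∀ x : dom, Aop x = 0 → (x : X) = 0
  jY : dom →ₗ[ℂ] Y
  j_compat : ∀ x : dom, ιX (x : X) = ιY (jY x)
  C₁ : ℝ
  C₂ : ℝ
  C₁_pos : 0 < C₁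
  C₂_pos : 0 < C₂
  normY_lower : ∀ x : dom, C₁ * ‖Aop x‖ ≤ ‖jY x‖
  normY_upper : ∀ x : dom, ‖jY x‖ ≤ C₂ * ‖Aop x‖
  S : ℝ → X →L[ℂ] X
  S_zero : S 0 = 1
  S_add : ∀ s t : ℝ, 0 ≤ s → 0 ≤ t → S (s + t) = (S s).comp (S t)
  S_strong_cont : ∀ x : X, ContinuousOn (fun t => S t x) (Set.Ici (0:ℝ))
  M₀ : ℝ
  S_bdd : ∀ t : ℝ, 0 ≤ t → ‖S t‖ ≤ M₀
  S_smoothing : ∀ (t : ℝ), 0 < t → ∀ x : X, S t x ∈ dom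
  M : ℝ
  S_analytic : ∀ (t : ℝ) (ht : 0 < t) (x : X),
    t * ‖Aop ⟨S t x, S_smoothing t ht x⟩‖ ≤ M * ‖x‖
  int_mem : ∀ (x : X) (t : ℝ), (∫ s in Set.Ioc (0:ℝ) t, S s x) ∈ dom
  gen_eq : ∀ (x : X) (t : ℝ), 0 ≤ t →
    Aop ⟨∫ s in Set.Ioc (0:ℝ) t, S s x, int_mem x t⟩ = x - S t x
  gen_eq_dom : ∀ (x : dom) (t : ℝ), 0 ≤ t →
    S t (x : X) - (x : X) = - ∫ s in Set.Ioc (0:ℝ) t, S s (Aop x)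
  inter_sub : ∀ (x : X) (y : Y),
    (∃ u : ℕ → dom, Filter.Tendsto (fun n => jY (u n)) Filter.atTop (nhds y)) →
    ιX x = ιY y → x ∈ dom

namespace DPG

variable {X Y Z : Type*} [NormedAddCommGroup X] [NormedSpace ℂ X] [CompleteSpace X]
  [NormedAddCommGroup Y] [NormedSpace ℂ Y]
  [AddCommGroup Z] [Module ℂ Z] [TopologicalSpace Z] [T2Space Z]
  (E : DPG X Y Z)

/-- `A` as an everywhere-defined function on `X` (junk value `0` off the domain). -/
def Afun (x : X) : X := if h : x ∈ E.dom then E.Aop ⟨x, h⟩ else 0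

/-- The domain `D(Ȧ) ⊆ Y` of the homogeneous operator: limits in `Y` of sequences in `D(A)`. -/
def DdotA : Set Y :=
  {y : Y | ∃ u : ℕ → E.dom, Filter.Tendsto (fun n => E.jY (u n)) Filter.atTop (nhds y)}

/-- The homogeneous operator `Ȧ : D(Ȧ) → X`, `Ȧ y = lim_k A x_k` for `x_k → y` in `Y`. -/
def Adot (y : Y) : X :=
  @Classical.epsilon X ⟨0⟩ fun L =>
    ∃ u : ℕ → E.dom, Filter.Tendsto (fun n => E.jY (u n)) Filter.atTop (nhds y) ∧
      Filter.Tendsto (fun n => E.Aop (u n)) Filter.atTop (nhds L)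

/-- The sum space `X + D(Ȧ)`, realized inside the ambient space `Z`. -/
def sumSpace : Set Z :=
  {z : Z | ∃ (x : X) (y : Y), y ∈ E.DdotA ∧ z = E.ιX x + E.ιY y}

/-- A choice of the `X`-component of an element of `X + D(Ȧ)`. -/
def decompX (z : Z) : X :=
  if h : ∃ (x : X) (y : Y), y ∈ E.DdotA ∧ z = E.ιX x + E.ιY y then h.choose else 0

/-- A choice of the `D(Ȧ)`-component of an element of `X + D(Ȧ)`. -/
def decompY (z : Z) : Y :=
  if h : ∃ (x : X) (y : Y), y ∈ E.DdotA ∧ z = E.ιX x + E.ιY y then h.choose_spec.choose else 0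

/-- `Ȧ` acting on elements of `Z` lying in (the image of) `D(Ȧ)`. -/
def AdotZ (z : Z) : X :=
  if h : ∃ y : Y, y ∈ E.DdotA ∧ E.ιY y = z then E.Adot h.choose else 0

/-- The extension of the semigroup to the sum space:
`e^{−tA}(x+y) = e^{−tA}x + y − ∫₀ᵗ e^{−sA}Ȧy ds`. -/
def SGext (t : ℝ) (z : Z) : Z :=
  E.ιX (E.S t (E.decompX z) - ∫ s in Set.Ioc (0:ℝ) t, E.S s (E.Adot (E.decompY z)))
    + E.ιY (E.decompY z)

/-- `Ȧ e^{−tA} z` for `z ∈ X + D(Ȧ)`. -/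
def AdotSG (z : Z) (t : ℝ) : X := E.AdotZ (E.SGext t z)

/-- The homogeneous Da Prato–Grisvard norm `‖z‖_{Ḋ_A(θ,q)}` on the sum space. -/
def homNorm (θ : ℝ) (q : ℝ≥0∞) (z : Z) : ℝ≥0∞ :=
  MeasureTheory.eLpNorm (fun t : ℝ => t ^ (1 - θ) • E.AdotSG z t) q haarScale

/-- The homogeneous Da Prato–Grisvard norm of an element of `X`
(for which `Ȧe^{−tA}x = Ae^{−tA}x`). -/
def homNormX (θ : ℝ) (q : ℝ≥0∞) (x : X) : ℝ≥0∞ :=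
  MeasureTheory.eLpNorm (fun t : ℝ => t ^ (1 - θ) • E.Afun (E.S t x)) q haarScale

/-- The (inhomogeneous) norm of `D_A(θ,q)`. -/
def inhomNorm (θ : ℝ) (q : ℝ≥0∞) (x : X) : ℝ≥0∞ :=
  ENNReal.ofReal ‖x‖ + E.homNormX θ q x

/-- Membership in `D_A(θ,q)`. -/
def memDA (θ : ℝ) (q : ℝ≥0∞) (x : X) : Prop :=
  MeasureTheory.AEStronglyMeasurable (fun t : ℝ => t ^ (1 - θ) • E.Afun (E.S t x)) haarScale ∧
    E.homNormX θ q x < ⊤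

/-- Membership in `Ḋ_A(θ,q)`. -/
def memDdot (θ : ℝ) (q : ℝ≥0∞) (z : Z) : Prop :=
  z ∈ E.sumSpace ∧
    MeasureTheory.AEStronglyMeasurable (fun t : ℝ => t ^ (1 - θ) • E.AdotSG z t) haarScale ∧
    E.homNorm θ q z < ⊤

/-- The `K`-functional of the interpolation couple `(X, D(Ȧ))`. -/
def Kfun (t : ℝ) (z : Z) : ℝ≥0∞ :=
  ⨅ (x : X) (y : Y) (_ : y ∈ E.DdotA) (_ : E.ιX x + E.ιY y = z),
    ENNReal.ofReal (‖x‖ + t * ‖E.Adot y‖)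

/-- The real interpolation norm of `(X, D(Ȧ))_{θ,q}`. -/
def interpNorm (θ : ℝ) (q : ℝ≥0∞) (z : Z) : ℝ≥0∞ :=
  lqNorm q haarScale fun t => ENNReal.ofReal (t ^ (-θ)) * E.Kfun t z

end DPG

namespace DPG

section Aux

variable {X Y Z : Type*} [NormedAddCommGroup X] [NormedSpace ℂ X] [CompleteSpace X]
  [NormedAddCommGroup Y] [NormedSpace ℂ Y]
  [AddCommGroup Z] [Module ℂ Z] [TopologicalSpace Z] [T2Space Z]
  (E : DPG X Y Z)

lemma my_adot_spec {y : Y} (hy : y ∈ E.DdotA) :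
    ∃ u : ℕ → E.dom, Filter.Tendsto (fun n => E.jY (u n)) Filter.atTop (nhds y) ∧
      Filter.Tendsto (fun n => E.Aop (u n)) Filter.atTop (nhds (E.Adot y)) := by
  have hex : ∃ L : X, ∃ u : ℕ → E.dom,
      Filter.Tendsto (fun n => E.jY (u n)) Filter.atTop (nhds y) ∧
      Filter.Tendsto (fun n => E.Aop (u n)) Filter.atTop (nhds L) := by
    obtain ⟨u, hu⟩ := hy
    have hcj : CauchySeq (fun n => E.jY (u n)) := hu.cauchySeq
    have hca : CauchySeq (fun n => E.Aop (u n)) := by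
      rw [Metric.cauchySeq_iff] at hcj ⊢
      intro ε hε
      obtain ⟨N, hN⟩ := hcj (E.C₁ * ε) (mul_pos E.C₁_pos hε)
      refine ⟨N, fun m hm n hn => ?_⟩
      have h1 := hN m hm n hn
      have h2 : E.C₁ * dist (E.Aop (u m)) (E.Aop (u n))
          ≤ dist (E.jY (u m)) (E.jY (u n)) := by
        rw [dist_eq_norm, dist_eq_norm, ← map_sub, ← map_sub]
        exact E.normY_lower (u m - u n)
      exact lt_of_mul_lt_mul_left (h2.trans_lt h1) E.C₁_pos.le
    obtain ⟨L, hL⟩ := cauchySeq_tendsto_of_complete hca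
    exact ⟨L, u, hu, hL⟩
  exact Classical.epsilon_spec hex

lemma my_adot_zero {y : Y} (hy : y ∈ E.DdotA) (h0 : E.Adot y = 0) : y = 0 := by
  obtain ⟨u, hu, hA⟩ := E.my_adot_spec hy
  rw [h0] at hA
  have h1 : Filter.Tendsto (fun n => E.jY (u n)) Filter.atTop (nhds 0) := by
    apply squeeze_zero_norm (fun n => E.normY_upper (u n))
    have h3 : Filter.Tendsto (fun n => ‖E.Aop (u n)‖) Filter.atTop (nhds 0) := by
      simpa using hA.norm
    simpa using h3.const_mul E.C₂
  exact tendsto_nhds_unique hu h1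

lemma my_decomp_spec {z : Z} (hz : z ∈ E.sumSpace) :
    E.decompY z ∈ E.DdotA ∧ z = E.ιX (E.decompX z) + E.ιY (E.decompY z) := by
  have h : ∃ (x : X) (y : Y), y ∈ E.DdotA ∧ z = E.ιX x + E.ιY y := hz
  unfold DPG.decompX DPG.decompY
  rw [dif_pos h, dif_pos h]
  exact ⟨h.choose_spec.choose_spec.1, h.choose_spec.choose_spec.2⟩

end Aux

/-- if `z ∈ X + D(Ȧ)` satisfies `Ȧ e^{−tA} z = 0` for all `t > 0`,
then `z = 0`. -/
theorem extended_semigroup_injective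
    {X Y Z : Type*} [NormedAddCommGroup X] [NormedSpace ℂ X] [CompleteSpace X]
    [NormedAddCommGroup Y] [NormedSpace ℂ Y]
    [AddCommGroup Z] [Module ℂ Z] [TopologicalSpace Z] [T2Space Z]
    (E : DPG X Y Z) :
    ∀ z ∈ E.sumSpace, (∀ t : ℝ, 0 < t → E.AdotSG z t = 0) → z = 0 := by
  intro z hz hzero
  obtain ⟨hy', hdec⟩ := E.my_decomp_spec hz
  set x' := E.decompX z with hx'def
  set y' := E.decompY z with hy'def
  set a := E.Adot y' with hadef
  have hSGdef : ∀ t : ℝ, E.SGext t z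
      = E.ιX (E.S t x' - ∫ s in Set.Ioc (0:ℝ) t, E.S s a) + E.ιY y' := fun t => rfl
  have hSG : ∀ t : ℝ, 0 < t → E.SGext t z = 0 := by
    intro t ht
    have hmem : (E.S t x' - ∫ s in Set.Ioc (0:ℝ) t, E.S s a) ∈ E.dom :=
      E.dom.sub_mem (E.S_smoothing t ht x') (E.int_mem a t)
    have hex : ∃ y : Y, y ∈ E.DdotA ∧ E.ιY y = E.SGext t z := by
      refine ⟨E.jY ⟨E.S t x' - ∫ s in Set.Ioc (0:ℝ) t, E.S s a, hmem⟩ + y', ?_, ?_⟩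
      · obtain ⟨u, hu⟩ := hy'
        refine ⟨fun n => ⟨E.S t x' - ∫ s in Set.Ioc (0:ℝ) t, E.S s a, hmem⟩ + u n, ?_⟩
        simpa [map_add] using
          (tendsto_const_nhds
            (x := E.jY ⟨E.S t x' - ∫ s in Set.Ioc (0:ℝ) t, E.S s a, hmem⟩)).add hu
      · rw [map_add, ← E.j_compat ⟨E.S t x' - ∫ s in Set.Ioc (0:ℝ) t, E.S s a, hmem⟩]
        exact (hSGdef t).symm
    have h0 := hzero t ht
    have h0' : E.AdotZ (E.SGext t z) = 0 := h0
    unfold DPG.AdotZ at h0'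
    rw [dif_pos hex] at h0'
    have hy0 := E.my_adot_zero hex.choose_spec.1 h0'
    have h2 := hex.choose_spec.2
    rw [hy0, map_zero] at h2
    exact h2.symm
  have key : ∀ t : ℝ, 0 < t →
      E.ιX (E.S t x' - ∫ s in Set.Ioc (0:ℝ) t, E.S s a) = - E.ιY y' := by
    intro t ht
    have h := hSG t ht
    rw [hSGdef t] at h
    exact eq_neg_of_add_eq_zero_left h
  have hconst : ∀ t : ℝ, 0 < t →
      (E.S t x' - ∫ s in Set.Ioc (0:ℝ) t, E.S s a)
        = (E.S 1 x' - ∫ s in Set.Ioc (0:ℝ) 1, E.S s a) := fun t ht =>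
    E.ιX_inj ((key t ht).trans (key 1 one_pos).symm)
  have hM₀ : 0 ≤ E.M₀ := le_trans (norm_nonneg _) (E.S_bdd 0 le_rfl)
  have e0 : E.S 0 x' = x' := by rw [E.S_zero]; rfl
  have hS0 : Filter.Tendsto (fun t => E.S t x') (nhdsWithin 0 (Set.Ioi (0:ℝ))) (nhds x') := by
    have h : Filter.Tendsto (fun t => E.S t x')
        (nhdsWithin 0 (Set.Ici (0:ℝ))) (nhds x') := by
      have h2 := (E.S_strong_cont x') 0 Set.self_mem_Ici
      rwa [ContinuousWithinAt, e0] at h2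
    exact h.mono_left (nhdsWithin_mono _ Set.Ioi_subset_Ici_self)
  have hint : Filter.Tendsto (fun t => ∫ s in Set.Ioc (0:ℝ) t, E.S s a)
      (nhdsWithin 0 (Set.Ioi (0:ℝ))) (nhds 0) := by
    apply squeeze_zero_norm' (a := fun t => (E.M₀ * ‖a‖) * t)
    · filter_upwards [self_mem_nhdsWithin] with t ht
      have hb := norm_setIntegral_le_of_norm_le_const_ae' (μ := MeasureTheory.volume)
        (s := Set.Ioc (0:ℝ) t) (C := E.M₀ * ‖a‖) measure_Ioc_lt_top
        (Filter.Eventually.of_forall fun s hs =>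
          le_trans ((E.S s).le_opNorm a)
            (mul_le_mul_of_nonneg_right (E.S_bdd s hs.1.le) (norm_nonneg a)))
      rwa [measureReal_def, Real.volume_Ioc, sub_zero, ENNReal.toReal_ofReal (le_of_lt ht)] at hb
    · have h : Filter.Tendsto (fun t : ℝ => (E.M₀ * ‖a‖) * t) (nhds 0)
          (nhds ((E.M₀ * ‖a‖) * 0)) := (continuous_const.mul continuous_id).tendsto 0
      simpa using h.mono_left (nhdsWithin_le_nhds (s := Set.Ioi (0:ℝ)))
  have hflim : Filter.Tendsto (fun t => E.S t x' - ∫ s in Set.Ioc (0:ℝ) t, E.S s a)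
      (nhdsWithin 0 (Set.Ioi (0:ℝ))) (nhds x') := by
    simpa using hS0.sub hint
  have hcl : Filter.Tendsto (fun _ : ℝ => E.S 1 x' - ∫ s in Set.Ioc (0:ℝ) 1, E.S s a)
      (nhdsWithin 0 (Set.Ioi (0:ℝ))) (nhds x') := by
    refine Filter.Tendsto.congr' ?_ hflim
    filter_upwards [self_mem_nhdsWithin] with t ht using hconst t ht
  have hw : E.S 1 x' - ∫ s in Set.Ioc (0:ℝ) 1, E.S s a = x' :=
    tendsto_nhds_unique tendsto_const_nhds hcl
  have hkey1 := key 1 one_pos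
  rw [hw] at hkey1
  rw [hdec, hkey1, neg_add_cancel]


end DPG
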